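/- arXiv:1911.07396 — 2 statements merged into one kernel-verified Lean document; each statement's English description precedes it below -/
import Mathlib

section
/- The function ψ(t) = (64/35)t^{1/2} - 2t² + (8/5)t³ - (3/7)t⁴ satisfies ψ(t) > 0, ψ'(t) > 0, ψ''(t) < 0, and ψ'''(t) > 0 for all t in the open interval (0,1). -/
noncomputable def psi : ℝ → ℝ :=
  fun t => 64 / 35 * Real.sqrt t - 2 * t ^ 2 + 8 / 5 * t ^ 3 - 3 / 7 * t ^ 4

noncomputable def psiD1 : ℝ → ℝ :=
  fun t => 32 / 35 * (Real.sqrt t)⁻¹ - 4 * t + 24 / 5 * t ^ 2 - 12 / 7 * t ^ 3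

noncomputable def psiD2 : ℝ → ℝ :=
  fun t => -16 / 35 * (t * Real.sqrt t)⁻¹ - 4 + 48 / 5 * t - 36 / 7 * t ^ 2

noncomputable def psiD3 : ℝ → ℝ :=
  fun t => 24 / 35 * (Real.sqrt t / t ^ 3) + 48 / 5 - 72 / 7 * t

lemma hd1 {t : ℝ} (ht : 0 < t) : HasDerivAt psi (psiD1 t) t := by
  have hs0 : Real.sqrt t ≠ 0 := ne_of_gt (Real.sqrt_pos.mpr ht)
  have hsq := Real.hasDerivAt_sqrt (ne_of_gt ht)
  have h := (((hsq.const_mul (64/35 : ℝ)).sub ((hasDerivAt_pow 2 t).const_mul 2)).add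
      ((hasDerivAt_pow 3 t).const_mul (8/5))).sub ((hasDerivAt_pow 4 t).const_mul (3/7))
  refine (show HasDerivAt psi _ t from h).congr_deriv ?_
  simp only [psiD1]
  field_simp
  ring

lemma hd2 {t : ℝ} (ht : 0 < t) : HasDerivAt psiD1 (psiD2 t) t := by
  have hs : 0 < Real.sqrt t := Real.sqrt_pos.mpr ht
  have hs0 : Real.sqrt t ≠ 0 := ne_of_gt hs
  have hsq := Real.hasDerivAt_sqrt (ne_of_gt ht)
  have hinv := hsq.inv hs0
  have h := (((hinv.const_mul (32/35 : ℝ)).sub ((hasDerivAt_id t).const_mul 4)).add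
      ((hasDerivAt_pow 2 t).const_mul (24/5))).sub ((hasDerivAt_pow 3 t).const_mul (12/7))
  refine (show HasDerivAt psiD1 _ t from h).congr_deriv ?_
  simp only [psiD2]
  set s := Real.sqrt t with hsdef
  rw [show t = s ^ 2 from (Real.sq_sqrt ht.le).symm]
  field_simp
  ring

lemma hd3 {t : ℝ} (ht : 0 < t) : HasDerivAt psiD2 (psiD3 t) t := by
  have hs : 0 < Real.sqrt t := Real.sqrt_pos.mpr ht
  have hs0 : Real.sqrt t ≠ 0 := ne_of_gt hs
  have hsq := Real.hasDerivAt_sqrt (ne_of_gt ht)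
  have hmul : HasDerivAt (fun x => x * Real.sqrt x)
      (1 * Real.sqrt t + t * (1 / (2 * Real.sqrt t))) t := (hasDerivAt_id t).mul hsq
  have hts0 : t * Real.sqrt t ≠ 0 := mul_ne_zero (ne_of_gt ht) hs0
  have hinv := hmul.inv hts0
  have h := (((hinv.const_mul (-16/35 : ℝ)).sub (hasDerivAt_const t 4)).add
      ((hasDerivAt_id t).const_mul (48/5))).sub ((hasDerivAt_pow 2 t).const_mul (36/7))
  refine (show HasDerivAt psiD2 _ t from h).congr_deriv ?_
  simp only [psiD3]
  set s := Real.sqrt t with hsdef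
  rw [show t = s ^ 2 from (Real.sq_sqrt ht.le).symm]
  field_simp
  ring

lemma deriv1 {t : ℝ} (ht : 0 < t) : deriv psi t = psiD1 t := (hd1 ht).deriv

lemma deriv2 {t : ℝ} (ht : 0 < t) : deriv (deriv psi) t = psiD2 t := by
  have he : deriv psi =ᶠ[nhds t] psiD1 :=
    Filter.eventually_of_mem (Ioi_mem_nhds ht) (fun s hs => (hd1 hs).deriv)
  rw [he.deriv_eq]
  exact (hd2 ht).deriv

lemma deriv3 {t : ℝ} (ht : 0 < t) : deriv (deriv (deriv psi)) t = psiD3 t := by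
  have he : deriv (deriv psi) =ᶠ[nhds t] psiD2 :=
    Filter.eventually_of_mem (Ioi_mem_nhds ht) (fun s hs => deriv2 hs)
  rw [he.deriv_eq]
  exact (hd3 ht).deriv

theorem psi_signs_on_Ioo :
    ∀ t ∈ Set.Ioo (0 : ℝ) 1,
      0 < psi t ∧ 0 < deriv psi t ∧ deriv (deriv psi) t < 0 ∧
        0 < deriv (deriv (deriv psi)) t := by
  intro t ht
  obtain ⟨ht0, ht1⟩ := ht
  set s := Real.sqrt t with hsdef
  have hs : 0 < s := Real.sqrt_pos.mpr ht0
  have hst : s ^ 2 = t := Real.sq_sqrt ht0.le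
  have hs1 : s < 1 := by nlinarith
  have h1s : (0:ℝ) < 1 - s := by linarith
  refine ⟨?_, ?_, ?_, ?_⟩
  · show 0 < 64 / 35 * s - 2 * t ^ 2 + 8 / 5 * t ^ 3 - 3 / 7 * t ^ 4
    have hA : 0 < 15 * s ^ 4 - 41 * s ^ 2 + 29 := by nlinarith [sq_nonneg (30 * s ^ 2 - 41)]
    have hq : 0 < s * (15 * s ^ 4 - 41 * s ^ 2 + 29)
        + s ^ 2 * (15 * s ^ 4 - 41 * s ^ 2 + 29) + 29 := by
      nlinarith [mul_pos hs hA, mul_pos (mul_pos hs hs) hA]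
    have key : 0 < 64 - 70 * s ^ 3 + 56 * s ^ 5 - 15 * s ^ 7 := by
      nlinarith [mul_pos h1s hq]
    rw [← hst]
    nlinarith [mul_pos hs key]
  · rw [deriv1 ht0]
    show 0 < 32 / 35 * s⁻¹ - 4 * t + 24 / 5 * t ^ 2 - 12 / 7 * t ^ 3
    have hq4 : 0 < 60 * s ^ 4 + 180 * s ^ 3 + 192 * s ^ 2 + 96 * s + 32 := by positivity
    have key : 0 < 32 / 35 - 4 * s ^ 3 + 24 / 5 * s ^ 5 - 12 / 7 * s ^ 7 := by
      nlinarith [mul_pos (pow_pos h1s 3) hq4]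
    have heq : 32 / 35 * s⁻¹ - 4 * t + 24 / 5 * t ^ 2 - 12 / 7 * t ^ 3
        = (32 / 35 - 4 * s ^ 3 + 24 / 5 * s ^ 5 - 12 / 7 * s ^ 7) / s := by
      rw [← hst]; field_simp
    rw [heq]
    exact div_pos key hs
  · rw [deriv2 ht0]
    show -16 / 35 * (t * s)⁻¹ - 4 + 48 / 5 * t - 36 / 7 * t ^ 2 < 0
    have hq5 : 0 < 180 * s ^ 5 + 360 * s ^ 4 + 204 * s ^ 3 + 48 * s ^ 2 + 32 * s + 16 := by
      positivity
    have key : 0 < 16 / 35 + 4 * s ^ 3 - 48 / 5 * s ^ 5 + 36 / 7 * s ^ 7 := by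
      nlinarith [mul_pos (pow_pos h1s 2) hq5]
    have heq : -16 / 35 * (t * s)⁻¹ - 4 + 48 / 5 * t - 36 / 7 * t ^ 2
        = -((16 / 35 + 4 * s ^ 3 - 48 / 5 * s ^ 5 + 36 / 7 * s ^ 7) / s ^ 3) := by
      rw [← hst]; field_simp; ring
    rw [heq]
    have : 0 < (16 / 35 + 4 * s ^ 3 - 48 / 5 * s ^ 5 + 36 / 7 * s ^ 7) / s ^ 3 :=
      div_pos key (pow_pos hs 3)
    linarith
  · rw [deriv3 ht0]
    show 0 < 24 / 35 * (s / t ^ 3) + 48 / 5 - 72 / 7 * t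
    have h5 : s ^ 5 < 1 := pow_lt_one₀ hs.le hs1 (by norm_num)
    have heq : s / t ^ 3 = 1 / s ^ 5 := by
      rw [← hst]; field_simp
    rw [heq]
    have h1 : 1 < 1 / s ^ 5 := (one_lt_div (pow_pos hs 5)).mpr h5
    nlinarith
end

section
/- The function f(x₁, x₂) = ∫₁^{|x|} dt/√(t²-1), defined on the half-plane P₊ = {(x₁, x₂) ∈ ℝ² : x₂ > 2}, satisfies the minimal surface equation div(∇f/√(1+|∇f|²)) = 0 on P₊. -/
/-- `f x = ∫₁^{|x|} dt / √(t² - 1)` (i.e. `arccosh |x|`). -/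
noncomputable def catF (x : EuclideanSpace ℝ (Fin 2)) : ℝ :=
  ∫ t in (1 : ℝ)..‖x‖, (Real.sqrt (t ^ 2 - 1))⁻¹

/-- first partial derivative in direction `i` -/
noncomputable def pd (g : EuclideanSpace ℝ (Fin 2) → ℝ) (x : EuclideanSpace ℝ (Fin 2))
    (i : Fin 2) : ℝ :=
  fderiv ℝ g x (EuclideanSpace.single i 1)

open MeasureTheory Filter

lemma meas_aux : Measurable fun t : ℝ => (Real.sqrt (t ^ 2 - 1))⁻¹ :=
  (Real.continuous_sqrt.comp (by continuity : Continuous fun t : ℝ => t ^ 2 - 1)).measurable.inv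

lemma integrable_aux {b : ℝ} (hb : 1 ≤ b) :
    IntervalIntegrable (fun t => (Real.sqrt (t ^ 2 - 1))⁻¹) volume 1 b := by
  have h1 : IntervalIntegrable (fun t : ℝ => t ^ (-(1/2) : ℝ)) volume 0 (b - 1) :=
    intervalIntegral.intervalIntegrable_rpow' (by norm_num)
  have h2 : IntervalIntegrable (fun t : ℝ => (t - 1) ^ (-(1/2) : ℝ)) volume 1 b := by
    simpa using h1.comp_sub_right 1
  refine h2.mono_fun meas_aux.aestronglyMeasurable ?_
  filter_upwards [ae_restrict_mem measurableSet_uIoc] with t ht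
  rw [Set.uIoc_of_le hb] at ht
  have ht1 : 1 < t := ht.1
  have h0 : (0:ℝ) < t - 1 := by linarith
  have h0' : t - 1 ≤ t ^ 2 - 1 := by nlinarith
  have hs : 0 < Real.sqrt (t - 1) := Real.sqrt_pos.mpr h0
  have key : (t - 1) ^ (-(1/2) : ℝ) = (Real.sqrt (t - 1))⁻¹ := by
    rw [Real.rpow_neg h0.le, Real.sqrt_eq_rpow]
  rw [Real.norm_eq_abs, Real.norm_eq_abs, key, abs_of_nonneg (by positivity),
    abs_of_nonneg (by positivity)]
  exact inv_anti₀ hs (Real.sqrt_le_sqrt h0')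

lemma hasDerivAt_intAux {r : ℝ} (hr : 1 < r) :
    HasDerivAt (fun u => ∫ t in (1:ℝ)..u, (Real.sqrt (t ^ 2 - 1))⁻¹)
      (Real.sqrt (r ^ 2 - 1))⁻¹ r := by
  have hne : Real.sqrt (r ^ 2 - 1) ≠ 0 := ne_of_gt (Real.sqrt_pos.mpr (by nlinarith))
  have hcont : ContinuousAt (fun t : ℝ => (Real.sqrt (t ^ 2 - 1))⁻¹) r :=
    ((Real.continuous_sqrt.comp
      (by continuity : Continuous fun t : ℝ => t ^ 2 - 1)).continuousAt).inv₀ hne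
  have hmeas : StronglyMeasurableAtFilter (fun t : ℝ => (Real.sqrt (t ^ 2 - 1))⁻¹)
      (nhds r) volume :=
    ⟨Set.univ, Filter.univ_mem, meas_aux.aestronglyMeasurable.restrict⟩
  exact intervalIntegral.integral_hasDerivAt_right (integrable_aux hr.le) hmeas hcont

lemma hasFDerivAt_catF {y : EuclideanSpace ℝ (Fin 2)} (hy : 1 < ‖y‖) :
    HasFDerivAt catF ((‖y‖ * Real.sqrt (‖y‖ ^ 2 - 1))⁻¹ • innerSL ℝ y) y := by
  have hy0 : 0 < ‖y‖ := by linarith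
  have hsq : HasFDerivAt (fun z : EuclideanSpace ℝ (Fin 2) => ‖z‖ ^ 2) (2 • innerSL ℝ y) y :=
    (hasStrictFDerivAt_norm_sq y).hasFDerivAt
  have hsqrt : HasDerivAt Real.sqrt (1 / (2 * Real.sqrt (‖y‖ ^ 2))) (‖y‖ ^ 2) :=
    Real.hasDerivAt_sqrt (by positivity)
  have hnorm0 : HasFDerivAt (fun z : EuclideanSpace ℝ (Fin 2) => Real.sqrt (‖z‖ ^ 2))
      ((1 / (2 * Real.sqrt (‖y‖ ^ 2))) • (2 • innerSL ℝ y)) y :=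
    hsqrt.comp_hasFDerivAt y hsq
  have hnormeq : (fun z : EuclideanSpace ℝ (Fin 2) => Real.sqrt (‖z‖ ^ 2))
      = fun z : EuclideanSpace ℝ (Fin 2) => ‖z‖ := by
    funext z; exact Real.sqrt_sq (norm_nonneg z)
  rw [hnormeq] at hnorm0
  have hnorm : HasFDerivAt (fun z : EuclideanSpace ℝ (Fin 2) => ‖z‖)
      ((‖y‖)⁻¹ • innerSL ℝ y) y := by
    have h2 : ((1 / (2 * Real.sqrt (‖y‖ ^ 2))) • (2 • innerSL ℝ y) :
        EuclideanSpace ℝ (Fin 2) →L[ℝ] ℝ) = (‖y‖)⁻¹ • innerSL ℝ y := by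
      rw [Real.sqrt_sq hy0.le]
      ext v
      simp [two_smul]
      field_simp
      ring
    rwa [h2] at hnorm0
  have hcomp := (hasDerivAt_intAux hy).comp_hasFDerivAt y hnorm
  have heq : catF = (fun u => ∫ t in (1:ℝ)..u, (Real.sqrt (t ^ 2 - 1))⁻¹) ∘
      (fun z : EuclideanSpace ℝ (Fin 2) => ‖z‖) := rfl
  rw [heq]
  refine hcomp.congr_fderiv ?_
  rw [smul_smul, mul_inv, mul_comm]

lemma pd_catF {y : EuclideanSpace ℝ (Fin 2)} (hy : 1 < ‖y‖) (i : Fin 2) :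
    pd catF y i = y i / (‖y‖ * Real.sqrt (‖y‖ ^ 2 - 1)) := by
  rw [pd, (hasFDerivAt_catF hy).fderiv]
  simp only [ContinuousLinearMap.coe_smul', Pi.smul_apply, innerSL_apply_apply, smul_eq_mul]
  rw [EuclideanSpace.inner_single_right]
  simp [div_eq_mul_inv, mul_comm]

lemma sum_sq_coords (y : EuclideanSpace ℝ (Fin 2)) :
    ∑ j : Fin 2, (y j) ^ 2 = ‖y‖ ^ 2 := by
  rw [EuclideanSpace.norm_eq, Real.sq_sqrt (Finset.sum_nonneg fun j _ => by positivity)]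
  simp [sq_abs]

lemma ratio_eq {y : EuclideanSpace ℝ (Fin 2)} (hy : 1 < ‖y‖) (i : Fin 2) :
    pd catF y i / Real.sqrt (1 + ∑ j : Fin 2, (pd catF y j) ^ 2) = y i * (‖y‖ ^ 2)⁻¹ := by
  have hy0 : 0 < ‖y‖ := by linarith
  set s := Real.sqrt (‖y‖ ^ 2 - 1) with hs
  have hspos : 0 < s := Real.sqrt_pos.mpr (by nlinarith)
  have hs2 : s ^ 2 = ‖y‖ ^ 2 - 1 := Real.sq_sqrt (by nlinarith)
  have hsum : 1 + ∑ j : Fin 2, (pd catF y j) ^ 2 = (‖y‖ / s) ^ 2 := by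
    have h1 : ∀ j : Fin 2, (pd catF y j) ^ 2 = (y j) ^ 2 / (‖y‖ * s) ^ 2 := fun j => by
      rw [pd_catF hy j, div_pow]
    rw [Finset.sum_congr rfl fun j _ => h1 j, ← Finset.sum_div, sum_sq_coords]
    field_simp
    nlinarith [hs2]
  rw [hsum, Real.sqrt_sq (by positivity), pd_catF hy i]
  field_simp
  rw [← hs, mul_div_assoc, div_self hspos.ne', mul_one]

theorem catF_solves_mse :
    ∀ x : EuclideanSpace ℝ (Fin 2), 2 < x 1 →
      ∑ i : Fin 2,
        pd (fun y => pd catF y i /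
          Real.sqrt (1 + ∑ j : Fin 2, (pd catF y j) ^ 2)) x i = 0 := by
  intro x hx
  have habs : |x 1| ≤ ‖x‖ := by
    rw [EuclideanSpace.norm_eq, ← Real.sqrt_sq_eq_abs]
    apply Real.sqrt_le_sqrt
    exact (Finset.single_le_sum (f := fun j => ‖x j‖ ^ 2) (fun j _ => by positivity)
      (Finset.mem_univ 1)).trans_eq' (by simp [sq_abs])
  have hx1 : 1 < ‖x‖ := lt_of_lt_of_le (by linarith [le_abs_self (x 1)]) habs
  have hx0 : 0 < ‖x‖ := by linarith
  have hQ : (0:ℝ) < ‖x‖ ^ 2 := by positivity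
  have hopen : IsOpen {y : EuclideanSpace ℝ (Fin 2) | 1 < ‖y‖} :=
    isOpen_lt continuous_const continuous_norm
  have hev : ∀ i : Fin 2,
      (fun y : EuclideanSpace ℝ (Fin 2) => pd catF y i /
        Real.sqrt (1 + ∑ j : Fin 2, (pd catF y j) ^ 2))
      =ᶠ[nhds x] (fun y => y i * (‖y‖ ^ 2)⁻¹) := by
    intro i
    filter_upwards [hopen.mem_nhds hx1] with y hy
    exact ratio_eq hy i
  have hsq : HasFDerivAt (fun z : EuclideanSpace ℝ (Fin 2) => ‖z‖ ^ 2) (2 • innerSL ℝ x) x :=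
    (hasStrictFDerivAt_norm_sq x).hasFDerivAt
  have hinv : HasFDerivAt (fun y : EuclideanSpace ℝ (Fin 2) => (‖y‖ ^ 2)⁻¹)
      ((-((‖x‖ ^ 2) ^ 2)⁻¹) • (2 • innerSL ℝ x)) x :=
    (hasDerivAt_inv hQ.ne').comp_hasFDerivAt x hsq
  have hGi : ∀ i : Fin 2, HasFDerivAt (fun y : EuclideanSpace ℝ (Fin 2) => y i * (‖y‖ ^ 2)⁻¹)
      ((x i) • ((-((‖x‖ ^ 2) ^ 2)⁻¹) • (2 • innerSL ℝ x))
        + ((‖x‖ ^ 2)⁻¹) • (EuclideanSpace.proj i : EuclideanSpace ℝ (Fin 2) →L[ℝ] ℝ)) x :=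
    fun i => ((EuclideanSpace.proj i).hasFDerivAt).mul hinv
  have hpd : ∀ i : Fin 2, pd (fun y => pd catF y i /
      Real.sqrt (1 + ∑ j : Fin 2, (pd catF y j) ^ 2)) x i
      = x i * (-((‖x‖ ^ 2) ^ 2)⁻¹ * (2 * x i)) + (‖x‖ ^ 2)⁻¹ := by
    intro i
    rw [pd, (hev i).fderiv_eq, (hGi i).fderiv]
    simp only [ContinuousLinearMap.add_apply, ContinuousLinearMap.coe_smul', Pi.smul_apply,
      two_smul, ContinuousLinearMap.add_apply, innerSL_apply_apply, smul_eq_mul]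
    rw [EuclideanSpace.inner_single_right]
    simp only [PiLp.proj_apply, EuclideanSpace.single_apply, if_pos rfl, starRingEnd_apply,
      star_trivial, if_true]
    ring
  rw [Finset.sum_congr rfl fun i _ => hpd i]
  have hsum := sum_sq_coords x
  rw [Fin.sum_univ_two] at hsum ⊢
  field_simp
  nlinarith [hsum]
end
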